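/- Let K be a field of characteristic 0 and F(x) ∈ xK[[x]] with nonzero linear coefficient. Then for every positive integer n, n·[x^n] F^{-1}(x) equals the residue [x^{-1}] F(x)^{-n}, the coefficient of x^{-1} in the formal Laurent series F(x)^{-n}. -/

import Mathlib

open PowerSeries Finset

/-- `IsComposition A u B` asserts that `B = A ∘ u` as formal power series, expressed
coefficientwise (valid when `u` has zero constant term). -/
def IsComposition {K : Type*} [Field K] (A u B : PowerSeries K) : Prop :=
  ∀ n : ℕ, PowerSeries.coeff n B =
    ∑ i ∈ Finset.range (n + 1), PowerSeries.coeff i A * PowerSeries.coeff n (u ^ i)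


section LagrangeAux

variable {K : Type*} [Field K]


lemma coeff_pow_zero_of_lt {G : PowerSeries K} (hG0 : PowerSeries.constantCoeff G = 0)
    {i m : ℕ} (h : m < i) : PowerSeries.coeff m (G ^ i) = 0 := by
  have hdvd : (PowerSeries.X : PowerSeries K) ^ i ∣ G ^ i :=
    pow_dvd_pow_of_dvd (PowerSeries.X_dvd_iff.mpr hG0) i
  exact (PowerSeries.X_pow_dvd_iff.mp hdvd) m h

lemma sum_antidiag_range {M : Type*} [AddCommMonoid M] (n : ℕ) (f : ℕ × ℕ → M)
    (h : ∀ p : ℕ × ℕ, n < p.1 + p.2 → f p = 0) :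
    ∑ k ∈ Finset.range (n+1), ∑ p ∈ Finset.HasAntidiagonal.antidiagonal k, f p
      = ∑ p ∈ Finset.range (n+1) ×ˢ Finset.range (n+1), f p := by
  have hd : (↑(Finset.range (n+1)) : Set ℕ).PairwiseDisjoint
      (fun k => (Finset.HasAntidiagonal.antidiagonal k : Finset (ℕ × ℕ))) := by
    intro a _ b _ hab
    refine Finset.disjoint_left.mpr fun p hpa hpb => hab ?_
    rw [← Finset.HasAntidiagonal.mem_antidiagonal.mp hpa, Finset.HasAntidiagonal.mem_antidiagonal.mp hpb]
  rw [← Finset.sum_biUnion hd]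
  apply Finset.sum_subset
  · intro p hp
    simp only [Finset.mem_biUnion, Finset.mem_range] at hp
    obtain ⟨k, hk, hpk⟩ := hp
    rw [Finset.HasAntidiagonal.mem_antidiagonal] at hpk
    simp only [Finset.mem_product, Finset.mem_range]
    omega
  · intro p _ hnp
    apply h
    by_contra hc
    push_neg at hc
    exact hnp (Finset.mem_biUnion.mpr ⟨p.1 + p.2, Finset.mem_range.mpr (by omega),
      Finset.HasAntidiagonal.mem_antidiagonal.mpr rfl⟩)

lemma IsComposition.mul {A B C D G : PowerSeries K}
    (hG0 : PowerSeries.constantCoeff G = 0)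
    (hAC : IsComposition A G C) (hBD : IsComposition B G D) :
    IsComposition (A * B) G (C * D) := by
  intro n
  -- LHS
  have lhs_eq : PowerSeries.coeff n (C * D)
      = ∑ p ∈ Finset.HasAntidiagonal.antidiagonal n, ∑ i ∈ Finset.range (n+1), ∑ j ∈ Finset.range (n+1),
          (PowerSeries.coeff i A * PowerSeries.coeff p.1 (G ^ i)) *
          (PowerSeries.coeff j B * PowerSeries.coeff p.2 (G ^ j)) := by
    rw [PowerSeries.coeff_mul]
    apply Finset.sum_congr rfl
    intro p hp
    rw [Finset.HasAntidiagonal.mem_antidiagonal] at hp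
    have h1 : PowerSeries.coeff p.1 C
        = ∑ i ∈ Finset.range (n+1), PowerSeries.coeff i A * PowerSeries.coeff p.1 (G ^ i) := by
      rw [hAC p.1]
      apply Finset.sum_subset
      · exact Finset.range_subset_range.mpr (by omega)
      · intro i _ hi
        rw [Finset.mem_range, not_lt] at hi
        rw [coeff_pow_zero_of_lt hG0 (by omega), mul_zero]
    have h2 : PowerSeries.coeff p.2 D
        = ∑ j ∈ Finset.range (n+1), PowerSeries.coeff j B * PowerSeries.coeff p.2 (G ^ j) := by
      rw [hBD p.2]
      apply Finset.sum_subset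
      · exact Finset.range_subset_range.mpr (by omega)
      · intro j _ hj
        rw [Finset.mem_range, not_lt] at hj
        rw [coeff_pow_zero_of_lt hG0 (by omega), mul_zero]
    rw [h1, h2, Finset.sum_mul_sum]
  -- RHS
  have rhs_eq : ∑ k ∈ Finset.range (n + 1),
        PowerSeries.coeff k (A * B) * PowerSeries.coeff n (G ^ k)
      = ∑ i ∈ Finset.range (n+1), ∑ j ∈ Finset.range (n+1),
          PowerSeries.coeff i A * PowerSeries.coeff j B *
            PowerSeries.coeff n (G ^ (i + j)) := by
    have step1 : ∀ k ∈ Finset.range (n+1),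
        PowerSeries.coeff k (A * B) * PowerSeries.coeff n (G ^ k)
        = ∑ p ∈ Finset.HasAntidiagonal.antidiagonal k,
            PowerSeries.coeff p.1 A * PowerSeries.coeff p.2 B *
              PowerSeries.coeff n (G ^ (p.1 + p.2)) := by
      intro k _
      rw [PowerSeries.coeff_mul, Finset.sum_mul]
      apply Finset.sum_congr rfl
      intro p hp
      rw [Finset.HasAntidiagonal.mem_antidiagonal] at hp
      rw [hp]
    rw [Finset.sum_congr rfl step1,
      sum_antidiag_range n
        (fun p => PowerSeries.coeff p.1 A * PowerSeries.coeff p.2 B *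
          PowerSeries.coeff n (G ^ (p.1 + p.2)))
        (fun p hp => by beta_reduce; rw [coeff_pow_zero_of_lt hG0 hp, mul_zero]),
      Finset.sum_product]
  rw [lhs_eq, rhs_eq]
  rw [Finset.sum_comm]
  apply Finset.sum_congr rfl
  intro i _
  rw [Finset.sum_comm]
  apply Finset.sum_congr rfl
  intro j _
  rw [pow_add, PowerSeries.coeff_mul, Finset.mul_sum]
  apply Finset.sum_congr rfl
  intro p _
  ring

lemma IsComposition.pow {F G : PowerSeries K}
    (hG0 : PowerSeries.constantCoeff G = 0)
    (hinv : IsComposition F G PowerSeries.X) (i : ℕ) :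
    IsComposition (F ^ i) G (PowerSeries.X ^ i) := by
  induction i with
  | zero =>
    intro n
    simp only [pow_zero]
    rw [Finset.sum_eq_single 0]
    · simp
    · intro k _ hk
      rw [PowerSeries.coeff_one, if_neg hk, zero_mul]
    · intro h
      exact absurd (Finset.mem_range.mpr (by omega)) h
  | succ i ih =>
    rw [pow_succ, pow_succ]
    exact IsComposition.mul hG0 ih hinv

lemma left_comp {F G : PowerSeries K}
    (hG0 : PowerSeries.constantCoeff G = 0)
    (hinv : IsComposition F G PowerSeries.X) (m : ℕ) :
    PowerSeries.coeff m PowerSeries.X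
      = ∑ k ∈ Finset.range (m+1), PowerSeries.coeff k G * PowerSeries.coeff m (F ^ k) := by
  rcases Nat.eq_zero_or_pos m with hm | hm
  · subst hm
    simp [PowerSeries.coeff_zero_eq_constantCoeff, hG0]
  · set s := m + 1 with hs
    set N : Matrix (Fin s) (Fin s) K := fun i j => PowerSeries.coeff (i:ℕ) (G ^ (j:ℕ)) with hN
    set M : Matrix (Fin s) (Fin s) K := fun i j => PowerSeries.coeff (i:ℕ) (F ^ (j:ℕ)) with hM
    have hNM : N * M = 1 := by
      ext i j
      rw [Matrix.mul_apply, Matrix.one_apply]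
      have : ∑ k : Fin s, N i k * M k j
          = ∑ k ∈ Finset.range s, PowerSeries.coeff (i:ℕ) (G ^ k) *
              PowerSeries.coeff k (F ^ (j:ℕ)) := by
        exact Fin.sum_univ_eq_sum_range (fun k => PowerSeries.coeff (i:ℕ) (G ^ k) * PowerSeries.coeff k (F ^ (j:ℕ))) s
      rw [this]
      have hsub : ∑ k ∈ Finset.range s, PowerSeries.coeff (i:ℕ) (G ^ k) *
              PowerSeries.coeff k (F ^ (j:ℕ))
          = ∑ k ∈ Finset.range ((i:ℕ)+1), PowerSeries.coeff (i:ℕ) (G ^ k) *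
              PowerSeries.coeff k (F ^ (j:ℕ)) := by
        symm
        apply Finset.sum_subset
        · exact Finset.range_subset_range.mpr (by omega)
        · intro k _ hk
          rw [Finset.mem_range, not_lt] at hk
          rw [coeff_pow_zero_of_lt hG0 (by omega), zero_mul]
      rw [hsub]
      have := (IsComposition.pow hG0 hinv (j:ℕ) (i:ℕ)).symm
      rw [Finset.sum_congr rfl (fun k _ => mul_comm (PowerSeries.coeff (i:ℕ) (G ^ k))
        (PowerSeries.coeff k (F ^ (j:ℕ)))), this, PowerSeries.coeff_X_pow]
      by_cases h : i = j
      · rw [if_pos h, if_pos (by rw [h])]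
      · rw [if_neg h, if_neg (fun hc => h (Fin.ext hc))]
    have hMN : M * N = 1 := mul_eq_one_comm.mp hNM
    have key := congrFun (congrFun hMN ⟨m, by omega⟩) ⟨1, by omega⟩
    rw [Matrix.mul_apply, Matrix.one_apply] at key
    have lhs2 : ∑ k : Fin s, M ⟨m, by omega⟩ k * N k ⟨1, by omega⟩
        = ∑ k ∈ Finset.range s, PowerSeries.coeff m (F ^ k) * PowerSeries.coeff k G := by
      rw [← Fin.sum_univ_eq_sum_range]
      apply Finset.sum_congr rfl
      intro k _
      simp only [hM, hN, pow_one]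
    rw [lhs2] at key
    have : (⟨m, by omega⟩ : Fin s) = ⟨1, by omega⟩ ↔ m = 1 := Fin.mk_eq_mk
    rw [PowerSeries.coeff_X]
    by_cases hm1 : m = 1
    · rw [if_pos (this.mpr hm1)] at key
      rw [if_pos hm1, ← key]
      apply Finset.sum_congr rfl
      intro k _
      ring
    · rw [if_neg (fun hc => hm1 (this.mp hc))] at key
      rw [if_neg hm1, ← key]
      apply Finset.sum_congr rfl
      intro k _
      ring


lemma dpow (w : PowerSeries K) (k : ℕ) :
    d⁄dX K (w ^ (k+1)) = PowerSeries.C ((k:K)+1) * w ^ k * d⁄dX K w := by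
  induction k with
  | zero => simp
  | succ k ih =>
    have hC : PowerSeries.C (((k+1:ℕ):K)+1) = PowerSeries.C ((k:K)+1) + 1 := by
      push_cast
      rw [map_add, map_one]
    rw [pow_succ, Derivation.leibniz, ih, hC, smul_eq_mul, smul_eq_mul]
    ring

lemma residue_aux [CharZero K] (u : PowerSeries K)
    (hu : PowerSeries.constantCoeff u ≠ 0) (m : ℕ) :
    PowerSeries.coeff (m+1) (u⁻¹ ^ (m+2) * d⁄dX K (PowerSeries.X * u)) = 0 := by
  set v := u⁻¹ with hv
  have huv : u * v = 1 := PowerSeries.mul_inv_cancel u hu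
  have hdF : d⁄dX K (PowerSeries.X * u) = u + PowerSeries.X * d⁄dX K u := by
    rw [Derivation.leibniz, smul_eq_mul, smul_eq_mul, PowerSeries.derivative_X, mul_one, add_comm]
  have hvu : v ^ (m+2) * u = v ^ (m+1) := by
    rw [pow_succ, mul_assoc, mul_comm v u, huv, mul_one]
  have h1 : v ^ (m+2) * d⁄dX K (PowerSeries.X * u)
      = v ^ (m+1) + PowerSeries.X * (v ^ (m+2) * d⁄dX K u) := by
    rw [hdF, mul_add, hvu]
    ring
  rw [h1, map_add, PowerSeries.coeff_succ_X_mul]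
  have hdv : d⁄dX K v = -(v ^ 2 * d⁄dX K u) := by
    rw [hv, PowerSeries.derivative_inv']
    ring
  have hpow := dpow v m
  have e2 : v ^ m * d⁄dX K v = -(v ^ (m+2) * d⁄dX K u) := by
    rw [hdv]
    ring
  have e1 : PowerSeries.coeff (m+1) (v ^ (m+1)) * ((m:K)+1)
      = ((m:K)+1) * -(PowerSeries.coeff m (v ^ (m+2) * d⁄dX K u)) := by
    have := PowerSeries.coeff_derivative (v ^ (m+1)) m
    rw [hpow, mul_assoc, PowerSeries.coeff_C_mul, e2, map_neg] at this
    rw [← this]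
  have hm1 : ((m:K)+1) ≠ 0 := Nat.cast_add_one_ne_zero m
  have := mul_left_cancel₀ hm1 ((by rw [← e1]; ring) :
    ((m:K)+1) * (PowerSeries.coeff (m+1) (v ^ (m+1)))
      = ((m:K)+1) * -(PowerSeries.coeff m (v ^ (m+2) * d⁄dX K u)))
  rw [this]
  ring

lemma coeff_mul_congr {A B E : PowerSeries K} {M : ℕ}
    (h : ∀ m ≤ M, PowerSeries.coeff m A = PowerSeries.coeff m B) :
    PowerSeries.coeff M (E * A) = PowerSeries.coeff M (E * B) := by
  rw [PowerSeries.coeff_mul, PowerSeries.coeff_mul]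
  apply Finset.sum_congr rfl
  intro p hp
  rw [Finset.HasAntidiagonal.mem_antidiagonal] at hp
  rw [h p.2 (by omega)]

end LagrangeAux

/-- Lagrange inversion, residue form: for `F ∈ xK[[x]]` with nonzero linear coefficient
and compositional inverse `G`, and `n ≥ 1`, one has
`n·[x^n]G = [x^{-1}](F^{-n})` in the field of formal Laurent series. -/
theorem lagrange_inversion_residue {K : Type*} [Field K] [CharZero K]
    (F G : PowerSeries K)
    (hF0 : PowerSeries.constantCoeff F = 0)
    (hF1 : PowerSeries.coeff 1 F ≠ 0)
    (hG0 : PowerSeries.constantCoeff G = 0)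
    (hinv : IsComposition F G PowerSeries.X)
    (n : ℕ) (hn : 1 ≤ n) :
    (n : K) * PowerSeries.coeff n G
      = (((HahnSeries.ofPowerSeries ℤ K F : LaurentSeries K) ^ (-(n : ℤ))).coeff (-1)) := by
  obtain ⟨N, rfl⟩ : ∃ N, n = N + 1 := ⟨n - 1, by omega⟩
  set u : PowerSeries K := PowerSeries.mk fun k => PowerSeries.coeff (k+1) F with hu_def
  have hFu : F = PowerSeries.X * u := by
    ext m
    cases m with
    | zero =>
      rw [PowerSeries.coeff_zero_eq_constantCoeff, map_mul, PowerSeries.constantCoeff_X,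
        zero_mul, hF0]
    | succ m => rw [PowerSeries.coeff_succ_X_mul, hu_def, PowerSeries.coeff_mk]
  have hu0 : PowerSeries.constantCoeff u = PowerSeries.coeff 1 F := by
    rw [← PowerSeries.coeff_zero_eq_constantCoeff_apply, hu_def, PowerSeries.coeff_mk]
  have hu0ne : PowerSeries.constantCoeff u ≠ 0 := hu0 ▸ hF1
  set v : PowerSeries K := u⁻¹ with hv
  have huv : u * v = 1 := PowerSeries.mul_inv_cancel u hu0ne
  have hvN : ∀ j : ℕ, v ^ j * u ^ j = 1 := fun j => by
    rw [← mul_pow, mul_comm v u, huv, one_pow]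
  have hGF := left_comp hG0 hinv
  -- Part B : Lagrange inversion in power series form
  have partB : PowerSeries.coeff N (v ^ (N+1)) = ((N:K)+1) * PowerSeries.coeff (N+1) G := by
    set S : PowerSeries K :=
      ∑ k ∈ Finset.range (N+2), PowerSeries.C (PowerSeries.coeff k G) * F ^ k with hS
    have h1 : ∀ m ≤ N+1, PowerSeries.coeff m S = PowerSeries.coeff m PowerSeries.X := by
      intro m hm
      rw [hS, map_sum]
      rw [Finset.sum_congr rfl (fun k _ => PowerSeries.coeff_C_mul m (F ^ k)
        (PowerSeries.coeff k G))]
      rw [hGF m]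
      symm
      apply Finset.sum_subset
      · exact Finset.range_subset_range.mpr (by omega)
      · intro k _ hk
        rw [Finset.mem_range, not_lt] at hk
        rw [coeff_pow_zero_of_lt hF0 (by omega), mul_zero]
    have h2 : ∀ m ≤ N, PowerSeries.coeff m (d⁄dX K S) = PowerSeries.coeff m 1 := by
      intro m hm
      rw [PowerSeries.coeff_derivative, h1 (m+1) (by omega), PowerSeries.coeff_X,
        PowerSeries.coeff_one]
      rcases Nat.eq_zero_or_pos m with h | h
      · subst h; norm_num
      · rw [if_neg (by omega), if_neg (by omega), zero_mul]
    have h3 : PowerSeries.coeff N (v ^ (N+1) * d⁄dX K S)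
        = PowerSeries.coeff N (v ^ (N+1)) := by
      rw [coeff_mul_congr h2, mul_one]
    have h4 : v ^ (N+1) * d⁄dX K S
        = ∑ k ∈ Finset.range (N+2),
            PowerSeries.C (PowerSeries.coeff k G) * (v ^ (N+1) * d⁄dX K (F ^ k)) := by
      rw [hS, map_sum, Finset.mul_sum]
      apply Finset.sum_congr rfl
      intro k _
      have : d⁄dX K (PowerSeries.C (PowerSeries.coeff k G) * F ^ k)
          = PowerSeries.C (PowerSeries.coeff k G) * d⁄dX K (F ^ k) := by
        rw [Derivation.leibniz, smul_eq_mul, smul_eq_mul, PowerSeries.derivative_C,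
          mul_zero, add_zero]
      rw [this]
      ring
    have h5 : PowerSeries.coeff N (v ^ (N+1) * d⁄dX K S)
        = ((N:K)+1) * PowerSeries.coeff (N+1) G := by
      rw [h4, map_sum, Finset.sum_eq_single (N+1)]
      · rw [PowerSeries.coeff_C_mul, dpow F N]
        have hFn : F ^ N = PowerSeries.X ^ N * u ^ N := by rw [hFu, mul_pow]
        have hvuN : v ^ (N+1) * u ^ N = v := by
          calc v ^ (N+1) * u ^ N = (v ^ N * u ^ N) * v := by ring
            _ = v := by rw [hvN N, one_mul]
        have hrw : v ^ (N+1) * (PowerSeries.C ((N:K)+1) * F ^ N * d⁄dX K F)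
            = PowerSeries.C ((N:K)+1) * (PowerSeries.X ^ N * (v * d⁄dX K F)) := by
          rw [hFn]
          calc v ^ (N+1) * (PowerSeries.C ((N:K)+1) * (PowerSeries.X ^ N * u ^ N) * d⁄dX K F)
              = PowerSeries.C ((N:K)+1) *
                  (PowerSeries.X ^ N * ((v ^ (N+1) * u ^ N) * d⁄dX K F)) := by ring
            _ = _ := by rw [hvuN]
        rw [hrw, PowerSeries.coeff_C_mul]
        have : PowerSeries.coeff N (PowerSeries.X ^ N * (v * d⁄dX K F))
            = PowerSeries.coeff 0 (v * d⁄dX K F) := by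
          have := PowerSeries.coeff_X_pow_mul (v * d⁄dX K F) N 0
          simpa using this
        rw [this]
        have hc0 : PowerSeries.coeff 0 (v * d⁄dX K F) = 1 := by
          rw [PowerSeries.coeff_zero_eq_constantCoeff, map_mul]
          have hcv : PowerSeries.constantCoeff v = (PowerSeries.coeff 1 F)⁻¹ := by
            rw [hv, PowerSeries.constantCoeff_inv, hu0]
          have hcd : PowerSeries.constantCoeff (d⁄dX K F) = PowerSeries.coeff 1 F := by
            rw [← PowerSeries.coeff_zero_eq_constantCoeff_apply, PowerSeries.coeff_derivative]
            norm_num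
          rw [hcv, hcd, inv_mul_cancel₀ hF1]
        rw [hc0, mul_one]
        ring
      · intro k hk hkne
        rw [PowerSeries.coeff_C_mul]
        rcases k with _ | j
        · simp
        · have hjN : j < N := by
            rw [Finset.mem_range] at hk
            omega
          obtain ⟨m', hm'⟩ : ∃ m', N = j + (m' + 1) := ⟨N - j - 1, by omega⟩
          rw [dpow F j]
          have hFj : F ^ j = PowerSeries.X ^ j * u ^ j := by rw [hFu, mul_pow]
          have hvj : v ^ (N+1) * u ^ j = v ^ (m'+2) := by
            have hsplit : v ^ (N+1) = v ^ (m'+2) * v ^ j := by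
              rw [← pow_add]
              congr 1
              omega
            rw [hsplit, mul_assoc, hvN j, mul_one]
          have hrw : v ^ (N+1) * (PowerSeries.C ((j:K)+1) * F ^ j * d⁄dX K F)
              = PowerSeries.C ((j:K)+1) *
                  (PowerSeries.X ^ j * (v ^ (m'+2) * d⁄dX K F)) := by
            rw [hFj]
            calc v ^ (N+1) * (PowerSeries.C ((j:K)+1) * (PowerSeries.X ^ j * u ^ j) * d⁄dX K F)
                = PowerSeries.C ((j:K)+1) *
                    (PowerSeries.X ^ j * ((v ^ (N+1) * u ^ j) * d⁄dX K F)) := by ring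
              _ = _ := by rw [hvj]
          rw [hrw, PowerSeries.coeff_C_mul]
          have hco : PowerSeries.coeff N (PowerSeries.X ^ j * (v ^ (m'+2) * d⁄dX K F))
              = PowerSeries.coeff (m'+1) (v ^ (m'+2) * d⁄dX K F) := by
            rw [show N = (m'+1) + j from by omega]
            exact PowerSeries.coeff_X_pow_mul _ j (m'+1)
          rw [hco]
          have := residue_aux u hu0ne m'
          rw [← hFu] at this
          rw [hv, this, mul_zero, mul_zero]
      · intro h
        exact absurd (Finset.mem_range.mpr (by omega)) h
    rw [← h3, h5]
  -- Part C : identify the residue with a power series coefficient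
  have partC : (((HahnSeries.ofPowerSeries ℤ K F : LaurentSeries K) ^ (-((N+1:ℕ) : ℤ))).coeff (-1))
      = PowerSeries.coeff N (v ^ (N+1)) := by
    have hf : (HahnSeries.ofPowerSeries ℤ K F : LaurentSeries K)
        = HahnSeries.single (1:ℤ) (1:K) * HahnSeries.ofPowerSeries ℤ K u := by
      rw [hFu, map_mul, HahnSeries.ofPowerSeries_X]
    have he : (HahnSeries.single (1:ℤ) (1:K) : LaurentSeries K) ^ (-((N+1:ℕ) : ℤ))
        = HahnSeries.single (-((N+1:ℕ) : ℤ)) (1:K) :=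
      (RatFunc.single_zpow (-((N+1:ℕ) : ℤ))).symm
    have hUz : (HahnSeries.ofPowerSeries ℤ K u : LaurentSeries K) ^ (-((N+1:ℕ) : ℤ))
        = HahnSeries.ofPowerSeries ℤ K (v ^ (N+1)) := by
      rw [zpow_neg, zpow_natCast]
      apply inv_eq_of_mul_eq_one_right
      rw [← map_pow, ← map_mul, ← mul_pow, huv, one_pow, map_one]
    rw [hf, mul_zpow, he, hUz]
    have hspl : (-1 : ℤ) = (N : ℤ) + (-((N+1:ℕ) : ℤ)) := by push_cast; ring
    rw [hspl, HahnSeries.coeff_single_mul_add, one_mul]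
    exact HahnSeries.ofPowerSeries_apply_coeff (v ^ (N+1)) N
  rw [partC, partB]
  push_cast
  ring
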